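/- Let R be an algebra over a field F, let σ be an automorphism of R, and let D be a q-skew σ-derivation on R. Then J(R[x;σ,D]) ∩ R is closed under σ, i.e., σ(J(R[x;σ,D]) ∩ R) ⊆ J(R[x;σ,D]) ∩ R. -/

import Mathlib

/-- `S` is (a copy of) the Ore extension `R[x;σ,D]` of `R`: `ι : R → S` is the inclusion of
coefficients, `X ∈ S` is the variable, every element of `S` is uniquely a polynomial
`Σᵢ ι(aᵢ) * Xⁱ`, and multiplication is governed by `X * a = σ(a) * X + D(a)`. -/
structure IsOreExtension {R S : Type*} [Ring R] [Ring S]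
    (σ : R → R) (D : R → R) (ι : R → S) (X : S) : Prop where
  σ_add : ∀ a b : R, σ (a + b) = σ a + σ b
  σ_mul : ∀ a b : R, σ (a * b) = σ a * σ b
  σ_one : σ 1 = 1
  D_add : ∀ a b : R, D (a + b) = D a + D b
  D_mul : ∀ a b : R, D (a * b) = σ a * D b + D a * b
  ι_add : ∀ a b : R, ι (a + b) = ι a + ι b
  ι_mul : ∀ a b : R, ι (a * b) = ι a * ι b
  ι_one : ι 1 = 1
  X_comm : ∀ a : R, X * ι a = ι (σ a) * X + ι (D a)
  repr : ∀ s : S, ∃ c : ℕ →₀ R, s = c.sum fun i a => ι a * X ^ i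
  uniq : ∀ c : ℕ →₀ R, (c.sum fun i a => ι a * X ^ i) = 0 → c = 0

section OreAux

variable {R S : Type*} [Ring R] [Ring S]

/-- polynomial with coefficient finsupp `c` -/
private def OreM (ι : R → S) (X : S) (c : ℕ →₀ R) : S :=
  c.sum fun i a => ι a * X ^ i

private lemma OreM_zero (ι : R → S) (X : S) : OreM ι X 0 = 0 :=
  Finsupp.sum_zero_index

private lemma OreM_add {ι : R → S} (X : S) (h0 : ι 0 = 0)
    (hadd : ∀ a b, ι (a + b) = ι a + ι b) (c d : ℕ →₀ R) :
    OreM ι X (c + d) = OreM ι X c + OreM ι X d :=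
  Finsupp.sum_add_index' (fun i => by rw [h0, zero_mul]) (fun i b₁ b₂ => by rw [hadd, add_mul])

private lemma OreM_single {ι : R → S} (X : S) (h0 : ι 0 = 0) (i : ℕ) (a : R) :
    OreM ι X (Finsupp.single i a) = ι a * X ^ i :=
  Finsupp.sum_single_index (by rw [h0, zero_mul])

private lemma OreM_sub {ι : R → S} (X : S) (hsub : ∀ a b, ι (a - b) = ι a - ι b) (c d : ℕ →₀ R) :
    OreM ι X (c - d) = OreM ι X c - OreM ι X d :=
  Finsupp.sum_sub_index (fun i b₁ b₂ => by rw [hsub, sub_mul])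

variable {σ D : R → R} {ι : R → S} {X : S}

private lemma ore_ι_zero (h : IsOreExtension σ D ι X) : ι 0 = 0 := by
  have := h.ι_add 0 0
  rw [add_zero] at this
  exact left_eq_add.mp this

private lemma ore_σ_zero (h : IsOreExtension σ D ι X) : σ 0 = 0 := by
  have := h.σ_add 0 0
  rw [add_zero] at this
  exact left_eq_add.mp this

private lemma ore_D_zero (h : IsOreExtension σ D ι X) : D 0 = 0 := by
  have := h.D_add 0 0
  rw [add_zero] at this
  exact left_eq_add.mp this

private lemma ore_ι_sub (h : IsOreExtension σ D ι X) (a b : R) : ι (a - b) = ι a - ι b := by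
  have h1 : ι (a - b) + ι b = ι a := by rw [← h.ι_add, sub_add_cancel]
  linear_combination (norm := abel) h1

private lemma ore_repr_eq (h : IsOreExtension σ D ι X) (s : S) :
    s = OreM ι X (h.repr s).choose :=
  (h.repr s).choose_spec

private lemma ore_uniq' (h : IsOreExtension σ D ι X) {c d : ℕ →₀ R}
    (hcd : OreM ι X c = OreM ι X d) : c = d := by
  have : OreM ι X (c - d) = 0 := by
    rw [OreM_sub X (ore_ι_sub h), hcd, sub_self]
  have := h.uniq (c - d) this
  exact sub_eq_zero.mp this

end OreAux

section OrePhi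

variable {F R S : Type*} [Field F] [Ring R] [Algebra F R] [Ring S]
variable {σ D : R → R} {ι : R → S} {X : S}

/-- the twisting endomorphism `Σ ι aᵢ Xⁱ ↦ Σ ι (σ aᵢ) Yⁱ`, `Y = ι(q⁻¹•1) X` -/
private noncomputable def OrePhi (h : IsOreExtension σ D ι X) (q : F) (s : S) : S :=
  OreM (fun a => ι (σ a)) (ι (algebraMap F R q⁻¹) * X) (h.repr s).choose

variable (h : IsOreExtension σ D ι X) (q : F)


private lemma ore_ισ_zero (h : IsOreExtension σ D ι X) : (fun a => ι (σ a)) 0 = 0 := by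
  simp only [ore_σ_zero h, ore_ι_zero h]

private lemma ore_ισ_add (h : IsOreExtension σ D ι X) : ∀ a b : R, ι (σ (a + b)) = ι (σ a) + ι (σ b) := fun a b => by
  rw [h.σ_add, h.ι_add]

private lemma OrePhi_eq {s : S} {c : ℕ →₀ R} (hs : s = OreM ι X c) :
    OrePhi h q s = OreM (fun a => ι (σ a)) (ι (algebraMap F R q⁻¹) * X) c := by
  have h1 : s = OreM ι X (h.repr s).choose := ore_repr_eq h s
  rw [OrePhi, ore_uniq' h (h1.symm.trans hs)]

private lemma OrePhi_zero : OrePhi h q 0 = 0 := by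
  rw [OrePhi_eq h q (OreM_zero ι X).symm, OreM_zero]

private lemma OrePhi_add (s t : S) : OrePhi h q (s + t) = OrePhi h q s + OrePhi h q t := by
  have hs := ore_repr_eq h s
  have ht := ore_repr_eq h t
  have hst : s + t = OreM ι X ((h.repr s).choose + (h.repr t).choose) := by
    rw [OreM_add X (ore_ι_zero h) h.ι_add, ← hs, ← ht]
  rw [OrePhi_eq h q hst, OreM_add _ (ore_ισ_zero h) (ore_ισ_add h),
    OrePhi_eq h q hs, OrePhi_eq h q ht]

private lemma OrePhi_mono (i : ℕ) (a : R) :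
    OrePhi h q (ι a * X ^ i) = ι (σ a) * (ι (algebraMap F R q⁻¹) * X) ^ i := by
  rw [OrePhi_eq h q (c := Finsupp.single i a) (by rw [OreM_single X (ore_ι_zero h)]),
    OreM_single _ (ore_ισ_zero h)]

private lemma OrePhi_iota (a : R) : OrePhi h q (ι a) = ι (σ a) := by
  have := OrePhi_mono h q 0 a
  simpa using this

private lemma OrePhi_one : OrePhi h q 1 = 1 := by
  have := OrePhi_iota h q 1
  rwa [h.ι_one, h.σ_one, h.ι_one] at this

private lemma OrePhi_sub (s t : S) : OrePhi h q (s - t) = OrePhi h q s - OrePhi h q t := by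
  have h1 : OrePhi h q (s - t) + OrePhi h q t = OrePhi h q s := by
    rw [← OrePhi_add, sub_add_cancel]
  linear_combination (norm := abel) h1

private lemma OrePhi_Xmul (hq : q ≠ 0) (hskew : ∀ a : R, D (σ a) = q • σ (D a)) (s : S) :
    OrePhi h q (X * s) = (ι (algebraMap F R q⁻¹) * X) * OrePhi h q s := by
  set Y : S := ι (algebraMap F R q⁻¹) * X with hYdef
  have key : ∀ c : ℕ →₀ R, OrePhi h q (X * OreM ι X c) = Y * OrePhi h q (OreM ι X c) := by
    intro c
    induction c using Finsupp.induction_linear with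
    | zero => rw [OreM_zero, mul_zero, OrePhi_zero, mul_zero]
    | add f g hf hg =>
        rw [OreM_add X (ore_ι_zero h) h.ι_add, mul_add, OrePhi_add, hf, hg, OrePhi_add, mul_add]
    | single i a =>
        rw [OreM_single X (ore_ι_zero h)]
        have l1 : X * (ι a * X ^ i) = ι (σ a) * X ^ (i + 1) + ι (D a) * X ^ i := by
          rw [← mul_assoc, h.X_comm a, add_mul, mul_assoc, ← pow_succ']
        have l2 : ι (algebraMap F R q⁻¹) * ι (D (σ a)) = ι (σ (D a)) := by
          rw [← h.ι_mul, hskew, Algebra.smul_def, ← mul_assoc, ← map_mul,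
            inv_mul_cancel₀ hq, map_one, one_mul]
        have l4 : Y * ι (σ a) = ι (σ (σ a)) * Y + ι (σ (D a)) := by
          rw [hYdef, mul_assoc, h.X_comm (σ a), mul_add, ← mul_assoc, ← h.ι_mul,
            Algebra.commutes, h.ι_mul, l2, mul_assoc]
        calc OrePhi h q (X * (ι a * X ^ i))
            = OrePhi h q (ι (σ a) * X ^ (i + 1) + ι (D a) * X ^ i) := by rw [l1]
          _ = ι (σ (σ a)) * Y ^ (i + 1) + ι (σ (D a)) * Y ^ i := by
              rw [OrePhi_add, OrePhi_mono, OrePhi_mono]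
          _ = Y * (ι (σ a) * Y ^ i) := by
              rw [← mul_assoc, l4, add_mul, mul_assoc, ← pow_succ']
          _ = Y * OrePhi h q (ι a * X ^ i) := by rw [OrePhi_mono]
  rw [ore_repr_eq h s]
  exact key _

private lemma OrePhi_Xpow_mul (hq : q ≠ 0) (hskew : ∀ a : R, D (σ a) = q • σ (D a))
    (i : ℕ) (s : S) :
    OrePhi h q (X ^ i * s) = (ι (algebraMap F R q⁻¹) * X) ^ i * OrePhi h q s := by
  induction i generalizing s with
  | zero => rw [pow_zero, pow_zero, one_mul, one_mul]
  | succ n ih =>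
      rw [pow_succ', mul_assoc, OrePhi_Xmul h q hq hskew, ih, pow_succ']
      simp only [mul_assoc]

private lemma OrePhi_iota_mul (a : R) (s : S) :
    OrePhi h q (ι a * s) = ι (σ a) * OrePhi h q s := by
  have key : ∀ c : ℕ →₀ R, OrePhi h q (ι a * OreM ι X c) = ι (σ a) * OrePhi h q (OreM ι X c) := by
    intro c
    induction c using Finsupp.induction_linear with
    | zero => rw [OreM_zero, mul_zero, OrePhi_zero, mul_zero]
    | add f g hf hg =>
        rw [OreM_add X (ore_ι_zero h) h.ι_add, mul_add, OrePhi_add, hf, hg, OrePhi_add, mul_add]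
    | single i b =>
        rw [OreM_single X (ore_ι_zero h), ← mul_assoc, ← h.ι_mul, OrePhi_mono, OrePhi_mono,
          h.σ_mul, h.ι_mul, mul_assoc]
  rw [ore_repr_eq h s]
  exact key _

private lemma OrePhi_mul (hq : q ≠ 0) (hskew : ∀ a : R, D (σ a) = q • σ (D a)) (s t : S) :
    OrePhi h q (s * t) = OrePhi h q s * OrePhi h q t := by
  have key : ∀ c : ℕ →₀ R,
      OrePhi h q (OreM ι X c * t) = OrePhi h q (OreM ι X c) * OrePhi h q t := by
    intro c
    induction c using Finsupp.induction_linear with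
    | zero => rw [OreM_zero, zero_mul, OrePhi_zero, zero_mul]
    | add f g hf hg =>
        rw [OreM_add X (ore_ι_zero h) h.ι_add, add_mul, OrePhi_add, hf, hg, OrePhi_add, add_mul]
    | single i b =>
        rw [OreM_single X (ore_ι_zero h), mul_assoc, OrePhi_iota_mul,
          OrePhi_Xpow_mul h q hq hskew, OrePhi_mono, mul_assoc]
  rw [ore_repr_eq h s]
  exact key _

private lemma OrePhi_pow (hq : q ≠ 0) (hskew : ∀ a : R, D (σ a) = q • σ (D a)) (s : S) (i : ℕ) :
    OrePhi h q (s ^ i) = OrePhi h q s ^ i := by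
  induction i with
  | zero => rw [pow_zero, pow_zero, OrePhi_one]
  | succ n ih => rw [pow_succ, pow_succ, OrePhi_mul h q hq hskew, ih]

private lemma OrePhi_surj (hσ : Function.Bijective σ) (hq : q ≠ 0)
    (hskew : ∀ a : R, D (σ a) = q • σ (D a)) :
    Function.Surjective (OrePhi h q) := by
  set w : R := Function.surjInv hσ.surjective (algebraMap F R q) with hw
  have hσw : σ w = algebraMap F R q := Function.surjInv_eq hσ.surjective _
  have hu : OrePhi h q (ι w * X ^ 1) = X := by
    rw [OrePhi_mono, hσw, pow_one, ← mul_assoc, ← h.ι_mul, ← map_mul,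
      mul_inv_cancel₀ hq, map_one, h.ι_one, one_mul]
  intro z
  have key : ∀ c : ℕ →₀ R, ∃ s : S, OrePhi h q s = OreM ι X c := by
    intro c
    induction c using Finsupp.induction_linear with
    | zero => exact ⟨0, by rw [OrePhi_zero, OreM_zero]⟩
    | add f g hf hg =>
        obtain ⟨s1, hs1⟩ := hf
        obtain ⟨s2, hs2⟩ := hg
        exact ⟨s1 + s2, by rw [OrePhi_add, hs1, hs2, OreM_add X (ore_ι_zero h) h.ι_add]⟩
    | single i b =>
        refine ⟨ι (Function.surjInv hσ.surjective b) * (ι w * X ^ 1) ^ i, ?_⟩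
        rw [OrePhi_mul h q hq hskew, OrePhi_pow h q hq hskew, hu, OrePhi_iota,
          Function.surjInv_eq hσ.surjective, OreM_single X (ore_ι_zero h)]
  obtain ⟨c, hc⟩ := h.repr z
  obtain ⟨s, hs⟩ := key c
  exact ⟨s, by rw [hs]; exact hc.symm⟩

end OrePhi

/-- If `R` is an algebra over a field `F`, `σ` is an automorphism of `R` and `D` is a `q`-skew
`σ`-derivation, then `J(R[x;σ,D]) ∩ R` is closed under `σ`. -/
theorem jacobson_cap_closed_under_sigma {F R S : Type*} [Field F]
    [Ring R] [Algebra F R] [Ring S]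
    (σ D : R → R) (ι : R → S) (X : S)
    (hOre : IsOreExtension σ D ι X) (hσ : Function.Bijective σ)
    (q : F) (hq : q ≠ 0) (hskew : ∀ a : R, D (σ a) = q • σ (D a)) :
    ∀ r : R, ι r ∈ (⊥ : Ideal S).jacobson → ι (σ r) ∈ (⊥ : Ideal S).jacobson := by
  intro r hr
  rw [Ideal.mem_jacobson_iff] at hr ⊢
  intro y
  obtain ⟨y₀, hy₀⟩ := OrePhi_surj hOre q hσ hq hskew y
  obtain ⟨z₀, hz₀⟩ := hr y₀
  rw [Ideal.mem_bot] at hz₀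
  refine ⟨OrePhi hOre q z₀, ?_⟩
  rw [Ideal.mem_bot]
  have : OrePhi hOre q (z₀ * y₀ * ι r + z₀ - 1) = 0 := by rw [hz₀, OrePhi_zero]
  rw [OrePhi_sub, OrePhi_add, OrePhi_one, OrePhi_mul hOre q hq hskew,
    OrePhi_mul hOre q hq hskew, OrePhi_iota, hy₀] at this
  exact this
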